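/- For a finite-dimensional algebra A over a field k, the zeroth Hochschild homology HH_0(A) = A/[A,A] is isomorphic as a k-vector space to the trace space HH_0(A-pmod) of the category of finitely generated projective A-modules, via the map sending the class of x ∈ A to the trace class of the right-multiplication endomorphism r_x of the regular module A. -/

import Mathlib

open DirectSum

/-- A bundled finitely generated projective left `A`-module. -/
structure PMod (A : Type) [Ring A] where
  carrier : Type
  [acg : AddCommGroup carrier]
  [mod : Module A carrier]
  proj : Module.Projective A carrier
  fin : Module.Finite A carrier

attribute [instance] PMod.acg PMod.mod

variable (k A : Type) [Field k] [Ring A] [Algebra k A]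

noncomputable instance : DecidableEq (PMod A) := Classical.decEq _

/-- The `k`-module structure on the carrier of a bundled projective `A`-module,
by restriction of scalars along `algebraMap k A`. -/
noncomputable instance PMod.modk (P : PMod A) : Module k P.carrier :=
  Module.compHom P.carrier (algebraMap k A)

instance PMod.smulComm (P : PMod A) : SMulCommClass A k P.carrier where
  smul_comm a c x := by
    show a • ((algebraMap k A c) • x) = (algebraMap k A c) • (a • x)
    rw [← mul_smul, ← mul_smul, Algebra.commutes]

/-- The direct sum, over all finitely generated projective left `A`-modules `P`,
of the endomorphism spaces `End_A(P)`. -/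
noncomputable abbrev EndSum : Type 1 :=
  ⨁ (P : PMod A), (P.carrier →ₗ[A] P.carrier)

/-- The span of the commutators `[C,C] = span { g∘f - f∘g }` inside the direct sum of the
endomorphism spaces. -/
noncomputable def commRel : Submodule k (EndSum A) :=
  Submodule.span k
    {v | ∃ (P P' : PMod A) (f : P.carrier →ₗ[A] P'.carrier)
        (g : P'.carrier →ₗ[A] P.carrier),
      v = DirectSum.of (fun P : PMod A => P.carrier →ₗ[A] P.carrier) P (g ∘ₗ f)
        - DirectSum.of (fun P : PMod A => P.carrier →ₗ[A] P.carrier) P' (f ∘ₗ g)}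

/-- `HH₀` of the category of finitely generated projective `A`-modules. -/
noncomputable abbrev HH0pmod : Type 1 := EndSum A ⧸ commRel k A

/-- The span of commutators `[A,A]` in `A`. -/
noncomputable def commA : Submodule k A :=
  Submodule.span k {z : A | ∃ x y : A, z = x * y - y * x}

/-- `HH₀(A) = A/[A,A]` where `[A,A]` is the `k`-span of commutators. -/
noncomputable abbrev HH0alg : Type := A ⧸ commA k A

/-- The regular module `A`, as an object of `A`-pmod. -/
noncomputable def regMod : PMod A :=
  { carrier := A
    proj := inferInstance
    fin := Module.Finite.self A }

section ProofAux

/-- The free module `A^n` as an object of `A`-pmod. -/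
noncomputable def freeMod (n : ℕ) : PMod A :=
  { carrier := Fin n → A
    proj := inferInstance
    fin := inferInstance }

/-- Decomposition of a vector in `A^n` as a sum of scaled basis vectors. -/
theorem pi_decomp {n : ℕ} (v : Fin n → A) :
    v = ∑ i, v i • (Pi.single i 1 : Fin n → A) := by
  funext t
  simp [Finset.sum_apply, Pi.single_apply, mul_ite, mul_one, mul_zero]

/-- Matrix-entry formula for an `A`-linear map between free modules. -/
theorem applyW {m n : ℕ} (W : (Fin m → A) →ₗ[A] (Fin n → A)) (x : Fin m → A) (j : Fin n) :
    W x j = ∑ i, x i * W (Pi.single i 1) j := by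
  conv_lhs => rw [pi_decomp A x]
  rw [map_sum, Finset.sum_apply]
  refine Finset.sum_congr rfl fun i _ => ?_
  rw [map_smul, Pi.smul_apply, smul_eq_mul]

/-- The naive trace of an endomorphism of `A^n`. -/
noncomputable def trF {n : ℕ} (F : (Fin n → A) →ₗ[A] (Fin n → A)) : A :=
  ∑ i, F (Pi.single i 1) i

theorem trF_add {n : ℕ} (F G : (Fin n → A) →ₗ[A] (Fin n → A)) :
    trF A (F + G) = trF A F + trF A G := by
  unfold trF
  rw [← Finset.sum_add_distrib]
  rfl

/-- The trace commutation relation, in `A/[A,A]`. -/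
theorem trF_comm {m n : ℕ} (U : (Fin m → A) →ₗ[A] (Fin n → A))
    (V : (Fin n → A) →ₗ[A] (Fin m → A)) :
    (Submodule.Quotient.mk (trF A (U ∘ₗ V)) : HH0alg k A) =
      Submodule.Quotient.mk (trF A (V ∘ₗ U)) := by
  rw [Submodule.Quotient.eq]
  have h1 : trF A (U ∘ₗ V) = ∑ j, ∑ i, V (Pi.single j 1) i * U (Pi.single i 1) j := by
    unfold trF
    refine Finset.sum_congr rfl fun j _ => ?_
    rw [LinearMap.comp_apply, applyW]
  have h2 : trF A (V ∘ₗ U) = ∑ i, ∑ j, U (Pi.single i 1) j * V (Pi.single j 1) i := by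
    unfold trF
    refine Finset.sum_congr rfl fun i _ => ?_
    rw [LinearMap.comp_apply, applyW]
  rw [h1, h2, Finset.sum_comm, ← Finset.sum_sub_distrib]
  refine Submodule.sum_mem _ fun j _ => ?_
  rw [← Finset.sum_sub_distrib]
  refine Submodule.sum_mem _ fun i _ => ?_
  exact Submodule.subset_span ⟨_, _, rfl⟩

/-- Every f.g. projective module is a retract of a finite free module. -/
theorem exists_retr (P : PMod A) :
    ∃ (n : ℕ) (s : P.carrier →ₗ[A] (Fin n → A)) (p : (Fin n → A) →ₗ[A] P.carrier),
      p ∘ₗ s = LinearMap.id := by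
  haveI := P.fin
  haveI := P.proj
  obtain ⟨n, p, hp⟩ := Module.Finite.exists_fin' A P.carrier
  obtain ⟨s, hs⟩ := Module.projective_lifting_property p LinearMap.id hp
  exact ⟨n, s, p, hs⟩

noncomputable def rN (P : PMod A) : ℕ := (exists_retr A P).choose

noncomputable def rS (P : PMod A) : P.carrier →ₗ[A] (Fin (rN A P) → A) :=
  (exists_retr A P).choose_spec.choose

noncomputable def rP (P : PMod A) : (Fin (rN A P) → A) →ₗ[A] P.carrier :=
  (exists_retr A P).choose_spec.choose_spec.choose

theorem rPS (P : PMod A) : rP A P ∘ₗ rS A P = LinearMap.id :=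
  (exists_retr A P).choose_spec.choose_spec.choose_spec

theorem rPS' (P : PMod A) (x : P.carrier) : rP A P (rS A P x) = x := by
  simpa using LinearMap.ext_iff.1 (rPS A P) x

/-- The Hattori–Stallings trace on `End_A(P)`, via the chosen retraction. -/
noncomputable def tP (P : PMod A) : (P.carrier →ₗ[A] P.carrier) →ₗ[k] HH0alg k A where
  toFun f := Submodule.Quotient.mk (trF A (rS A P ∘ₗ f ∘ₗ rP A P))
  map_add' f g := by
    show Submodule.Quotient.mk (trF A (rS A P ∘ₗ (f + g) ∘ₗ rP A P)) =
      Submodule.Quotient.mk (trF A (rS A P ∘ₗ f ∘ₗ rP A P)) +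
        Submodule.Quotient.mk (trF A (rS A P ∘ₗ g ∘ₗ rP A P))
    rw [LinearMap.add_comp, LinearMap.comp_add, trF_add, Submodule.Quotient.mk_add]
  map_smul' c f := by
    show Submodule.Quotient.mk (trF A (rS A P ∘ₗ (c • f) ∘ₗ rP A P)) =
      (RingHom.id k) c • Submodule.Quotient.mk (trF A (rS A P ∘ₗ f ∘ₗ rP A P))
    have h : trF A (rS A P ∘ₗ (c • f) ∘ₗ rP A P) = c • trF A (rS A P ∘ₗ f ∘ₗ rP A P) := by
      unfold trF
      rw [Finset.smul_sum]
      refine Finset.sum_congr rfl fun i _ => ?_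
      show rS A P ((c • f) (rP A P (Pi.single i 1))) i =
        c • rS A P (f (rP A P (Pi.single i 1))) i
      have h2 : (c • f) (rP A P (Pi.single i 1)) =
          algebraMap k A c • f (rP A P (Pi.single i 1)) := rfl
      rw [h2, map_smul, Pi.smul_apply, smul_eq_mul, ← Algebra.smul_def]
    rw [h, Submodule.Quotient.mk_smul, RingHom.id_apply]

/-- The total trace map on the direct sum. -/
noncomputable def tSum : EndSum A →ₗ[k] HH0alg k A :=
  DirectSum.toModule k (PMod A) (HH0alg k A) (fun P => tP k A P)

theorem tSum_of (P : PMod A) (f : P.carrier →ₗ[A] P.carrier) :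
    tSum k A (DirectSum.of (fun P : PMod A => P.carrier →ₗ[A] P.carrier) P f) = tP k A P f := by
  exact DirectSum.toModule_lof (N := HH0alg k A) (φ := fun P => tP k A P) k P f

/-- The trace is symmetric on commutators. -/
theorem t_comm (P P' : PMod A) (f : P.carrier →ₗ[A] P'.carrier)
    (g : P'.carrier →ₗ[A] P.carrier) :
    tP k A P (g ∘ₗ f) = tP k A P' (f ∘ₗ g) := by
  have hU : (rS A P ∘ₗ g ∘ₗ rP A P') ∘ₗ (rS A P' ∘ₗ f ∘ₗ rP A P) =
      rS A P ∘ₗ (g ∘ₗ f) ∘ₗ rP A P := by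
    apply LinearMap.ext; intro x
    simp only [LinearMap.comp_apply, rPS']
  have hV : (rS A P' ∘ₗ f ∘ₗ rP A P) ∘ₗ (rS A P ∘ₗ g ∘ₗ rP A P') =
      rS A P' ∘ₗ (f ∘ₗ g) ∘ₗ rP A P' := by
    apply LinearMap.ext; intro x
    simp only [LinearMap.comp_apply, rPS']
  show (Submodule.Quotient.mk (trF A (rS A P ∘ₗ (g ∘ₗ f) ∘ₗ rP A P)) : HH0alg k A) =
    Submodule.Quotient.mk (trF A (rS A P' ∘ₗ (f ∘ₗ g) ∘ₗ rP A P'))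
  rw [← hU, ← hV]
  exact trF_comm k A _ _

theorem t_vanish : commRel k A ≤ LinearMap.ker (tSum k A) := by
  rw [commRel, Submodule.span_le]
  rintro v ⟨P, P', f, g, rfl⟩
  rw [SetLike.mem_coe, LinearMap.mem_ker, map_sub, tSum_of, tSum_of, t_comm, sub_self]

/-- Multiplicativity of right multiplication. -/
theorem ts_mul (x y : A) :
    LinearMap.toSpanSingleton A A y ∘ₗ LinearMap.toSpanSingleton A A x =
      LinearMap.toSpanSingleton A A (x * y) := by
  apply LinearMap.ext; intro a
  show (a • x) • y = a • (x * y)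
  rw [smul_eq_mul, smul_eq_mul, smul_eq_mul, mul_assoc]

theorem ts_sum {ι : Type} (s : Finset ι) (a : ι → A) :
    LinearMap.toSpanSingleton A A (∑ j ∈ s, a j) =
      ∑ j ∈ s, LinearMap.toSpanSingleton A A (a j) := by
  apply LinearMap.ext; intro b
  rw [LinearMap.sum_apply]
  show b • (∑ j ∈ s, a j) = _
  rw [Finset.smul_sum]
  rfl

/-- The class in `HH₀(A-pmod)` of an endomorphism of `P`. -/
noncomputable def clsOf (P : PMod A) (f : P.carrier →ₗ[A] P.carrier) : HH0pmod k A :=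
  Submodule.Quotient.mk
    (DirectSum.of (fun P : PMod A => P.carrier →ₗ[A] P.carrier) P f)

/-- The class map for the regular module, as an additive hom on `A →ₗ[A] A`. -/
noncomputable def clsReg : (A →ₗ[A] A) →+ HH0pmod k A where
  toFun φ := Submodule.Quotient.mk
    (DirectSum.of (fun P : PMod A => P.carrier →ₗ[A] P.carrier) (regMod A) φ)
  map_zero' := by
    exact (congrArg (Submodule.Quotient.mk (p := commRel k A))
      (map_zero (DirectSum.of (fun P : PMod A => P.carrier →ₗ[A] P.carrier) (regMod A)))).trans
      (Submodule.Quotient.mk_zero _)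
  map_add' φ ψ := by
    rw [← Submodule.Quotient.mk_add]
    exact congrArg (Submodule.Quotient.mk (p := commRel k A))
      (map_add (DirectSum.of (fun P : PMod A => P.carrier →ₗ[A] P.carrier) (regMod A)) φ ψ)

/-- The class map for the free module `A^n`, as an additive hom. -/
noncomputable def clsFree (n : ℕ) : ((Fin n → A) →ₗ[A] (Fin n → A)) →+ HH0pmod k A where
  toFun F := Submodule.Quotient.mk
    (DirectSum.of (fun P : PMod A => P.carrier →ₗ[A] P.carrier) (freeMod A n) F)
  map_zero' := by
    exact (congrArg (Submodule.Quotient.mk (p := commRel k A))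
      (map_zero (DirectSum.of (fun P : PMod A => P.carrier →ₗ[A] P.carrier) (freeMod A n)))).trans
      (Submodule.Quotient.mk_zero _)
  map_add' φ ψ := by
    rw [← Submodule.Quotient.mk_add]
    exact congrArg (Submodule.Quotient.mk (p := commRel k A))
      (map_add (DirectSum.of (fun P : PMod A => P.carrier →ₗ[A] P.carrier) (freeMod A n)) φ ψ)

/-- Quotient classes of commutators agree in `HH₀(A-pmod)`. -/
theorem cls_comm (P P' : PMod A) (f : P.carrier →ₗ[A] P'.carrier)
    (g : P'.carrier →ₗ[A] P.carrier) :
    clsOf k A P (g ∘ₗ f) = clsOf k A P' (f ∘ₗ g) := by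
  unfold clsOf
  rw [Submodule.Quotient.eq]
  exact Submodule.subset_span ⟨P, P', f, g, rfl⟩

/-- Reduction of an endomorphism of a free module to a right multiplication. -/
theorem free_reduce (n : ℕ) (F : (Fin n → A) →ₗ[A] (Fin n → A)) :
    clsFree k A n F = clsReg k A (LinearMap.toSpanSingleton A A (trF A F)) := by
  have hdecomp : F = ∑ j, (F ∘ₗ LinearMap.single A (fun _ : Fin n => A) j) ∘ₗ
      LinearMap.proj j := by
    apply LinearMap.ext; intro x
    rw [LinearMap.sum_apply]
    simp only [LinearMap.comp_apply, LinearMap.proj_apply, LinearMap.single_apply]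
    rw [← map_sum]
    congr 1
    funext t
    simp [Finset.sum_apply, Pi.single_apply]
  have step1 : ∀ j : Fin n,
      clsFree k A n ((F ∘ₗ LinearMap.single A (fun _ : Fin n => A) j) ∘ₗ LinearMap.proj j) =
        clsReg k A (LinearMap.toSpanSingleton A A (F (Pi.single j 1) j)) := by
    intro j
    have hmap : (LinearMap.proj j : (Fin n → A) →ₗ[A] A) ∘ₗ
        (F ∘ₗ LinearMap.single A (fun _ : Fin n => A) j) =
        LinearMap.toSpanSingleton A A (F (Pi.single j 1) j) := by
      apply LinearMap.ext; intro a
      simp only [LinearMap.comp_apply, LinearMap.proj_apply, LinearMap.single_apply,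
        LinearMap.toSpanSingleton_apply]
      have h2 : (Pi.single j a : Fin n → A) = a • (Pi.single j 1 : Fin n → A) := by
        funext t
        by_cases h : t = j <;> simp [Pi.single_apply, h]
      rw [h2, map_smul, Pi.smul_apply]
    have h := cls_comm k A (freeMod A n) (regMod A) (LinearMap.proj j)
      (F ∘ₗ LinearMap.single A (fun _ : Fin n => A) j)
    exact h.trans (congrArg (clsReg k A) hmap)
  calc clsFree k A n F
      = clsFree k A n (∑ j, (F ∘ₗ LinearMap.single A (fun _ : Fin n => A) j) ∘ₗ
          LinearMap.proj j) := by rw [← hdecomp]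
    _ = ∑ j, clsFree k A n ((F ∘ₗ LinearMap.single A (fun _ : Fin n => A) j) ∘ₗ
          LinearMap.proj j) := map_sum _ _ _
    _ = ∑ j, clsReg k A (LinearMap.toSpanSingleton A A (F (Pi.single j 1) j)) :=
          Finset.sum_congr rfl fun j _ => step1 j
    _ = clsReg k A (∑ j, LinearMap.toSpanSingleton A A (F (Pi.single j 1) j)) :=
          (map_sum _ _ _).symm
    _ = clsReg k A (LinearMap.toSpanSingleton A A (trF A F)) := by
          rw [show trF A F = ∑ j, F (Pi.single j 1) j from rfl, ts_sum]

/-- Reduction of any endomorphism class to a right multiplication. -/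
theorem gen_reduce (P : PMod A) (f : P.carrier →ₗ[A] P.carrier) :
    clsOf k A P f =
      clsReg k A (LinearMap.toSpanSingleton A A (trF A (rS A P ∘ₗ f ∘ₗ rP A P))) := by
  have h1 : f = (f ∘ₗ rP A P) ∘ₗ rS A P := by
    rw [LinearMap.comp_assoc, rPS, LinearMap.comp_id]
  calc clsOf k A P f
      = clsOf k A P ((f ∘ₗ rP A P) ∘ₗ rS A P) := by rw [← h1]
    _ = clsOf k A (freeMod A (rN A P)) (rS A P ∘ₗ (f ∘ₗ rP A P)) :=
        cls_comm k A P (freeMod A (rN A P)) (rS A P) (f ∘ₗ rP A P)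
    _ = clsFree k A (rN A P) (rS A P ∘ₗ f ∘ₗ rP A P) := rfl
    _ = clsReg k A (LinearMap.toSpanSingleton A A (trF A (rS A P ∘ₗ f ∘ₗ rP A P))) :=
        free_reduce k A (rN A P) (rS A P ∘ₗ f ∘ₗ rP A P)

/-- `r_x` has trace class `x`, for any free retraction of the regular module. -/
theorem trace_reg {m : ℕ} (x : A) (s : A →ₗ[A] (Fin m → A)) (q : (Fin m → A) →ₗ[A] A)
    (hqs : ∀ y, q (s y) = y) :
    (Submodule.Quotient.mk (trF A (s ∘ₗ LinearMap.toSpanSingleton A A x ∘ₗ q)) :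
        HH0alg k A) = Submodule.Quotient.mk x := by
  rw [Submodule.Quotient.eq]
  have htr : trF A (s ∘ₗ LinearMap.toSpanSingleton A A x ∘ₗ q) =
      ∑ i, q (Pi.single i 1) * s x i := by
    unfold trF
    refine Finset.sum_congr rfl fun i _ => ?_
    show s (q (Pi.single i 1) • x) i = _
    rw [map_smul, Pi.smul_apply, smul_eq_mul]
  have hx : x = ∑ i, s x i * q (Pi.single i 1) := by
    conv_lhs => rw [← hqs x, pi_decomp A (s x)]
    rw [map_sum]
    refine Finset.sum_congr rfl fun i _ => ?_
    rw [map_smul, smul_eq_mul]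
  have hkey : (∑ i, q (Pi.single i 1) * s x i) - x =
      ∑ i, (q (Pi.single i 1) * s x i - s x i * q (Pi.single i 1)) := by
    rw [Finset.sum_sub_distrib, ← hx]
  rw [htr, hkey]
  exact Submodule.sum_mem _ fun i _ => Submodule.subset_span ⟨_, _, rfl⟩

/-- The forward map `A → HH₀(A-pmod)`. -/
noncomputable def e0 : A →ₗ[k] HH0pmod k A where
  toFun x := clsReg k A (LinearMap.toSpanSingleton A A x)
  map_add' x y := by
    show clsReg k A (LinearMap.toSpanSingleton A A (x + y)) =
      clsReg k A (LinearMap.toSpanSingleton A A x) +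
        clsReg k A (LinearMap.toSpanSingleton A A y)
    have hadd : LinearMap.toSpanSingleton A A (x + y) =
        LinearMap.toSpanSingleton A A x + LinearMap.toSpanSingleton A A y := by
      apply LinearMap.ext; intro a
      exact mul_add a x y
    rw [hadd, map_add]
  map_smul' c x := by
    show clsReg k A (LinearMap.toSpanSingleton A A (c • x)) =
      c • clsReg k A (LinearMap.toSpanSingleton A A x)
    have step : ∀ φ : (regMod A).carrier →ₗ[A] (regMod A).carrier,
        c • (Submodule.Quotient.mk
            (DirectSum.of (fun P : PMod A => P.carrier →ₗ[A] P.carrier) (regMod A) φ) :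
          HH0pmod k A) =
        Submodule.Quotient.mk
          (DirectSum.of (fun P : PMod A => P.carrier →ₗ[A] P.carrier) (regMod A) (c • φ)) := by
      intro φ
      rw [← Submodule.Quotient.mk_smul]
      exact congrArg (Submodule.Quotient.mk (p := commRel k A))
        ((DirectSum.lof k (PMod A) (fun P : PMod A => P.carrier →ₗ[A] P.carrier)
          (regMod A)).map_smul c φ).symm
    have hts : ∀ φ : (regMod A).carrier →ₗ[A] (regMod A).carrier,
        φ = LinearMap.toSpanSingleton A A x →
        c • φ = LinearMap.toSpanSingleton A A (c • x) := by
      intro φ hφ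
      apply LinearMap.ext; intro a
      have e1 : (c • φ) a = algebraMap k A c • φ a := rfl
      rw [e1, hφ]
      have key : algebraMap k A c * ((show A from a) * x) = (show A from a) * (c • x) := by
        rw [← mul_assoc, Algebra.commutes, mul_assoc, ← Algebra.smul_def]
      exact key
    refine Eq.trans ?_ (step (LinearMap.toSpanSingleton A A x)).symm
    exact congrArg (clsReg k A) (hts (LinearMap.toSpanSingleton A A x) rfl).symm

theorem clsReg_eq_zero (φ : A →ₗ[A] A)
    (h : DirectSum.of (fun P : PMod A => P.carrier →ₗ[A] P.carrier) (regMod A) φ ∈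
      commRel k A) : clsReg k A φ = 0 :=
  (Submodule.Quotient.mk_eq_zero _).2 h

theorem e0_vanish : commA k A ≤ LinearMap.ker (e0 k A) := by
  rw [commA, Submodule.span_le]
  rintro v ⟨x, y, rfl⟩
  rw [SetLike.mem_coe, LinearMap.mem_ker]
  have h1 : e0 k A (x * y - y * x) =
      clsReg k A (LinearMap.toSpanSingleton A A (x * y) -
        LinearMap.toSpanSingleton A A (y * x)) := by
    rw [map_sub, map_sub]
    rfl
  rw [h1]
  refine clsReg_eq_zero k A _ ?_
  have hts : LinearMap.toSpanSingleton A A (x * y) - LinearMap.toSpanSingleton A A (y * x) =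
      LinearMap.toSpanSingleton A A y ∘ₗ LinearMap.toSpanSingleton A A x -
        LinearMap.toSpanSingleton A A x ∘ₗ LinearMap.toSpanSingleton A A y := by
    rw [ts_mul, ts_mul]
  refine Submodule.subset_span
    ⟨regMod A, regMod A, LinearMap.toSpanSingleton A A x, LinearMap.toSpanSingleton A A y, ?_⟩
  exact (congrArg
    (DirectSum.of (fun P : PMod A => P.carrier →ₗ[A] P.carrier) (regMod A)) hts).trans
    (map_sub (DirectSum.of (fun P : PMod A => P.carrier →ₗ[A] P.carrier) (regMod A)) _ _)

/-- The induced map `HH₀(A) → HH₀(A-pmod)`. -/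
noncomputable def eBar : HH0alg k A →ₗ[k] HH0pmod k A :=
  (commA k A).liftQ (e0 k A) (e0_vanish k A)

/-- The induced map `HH₀(A-pmod) → HH₀(A)`. -/
noncomputable def tBar : HH0pmod k A →ₗ[k] HH0alg k A :=
  (commRel k A).liftQ (tSum k A) (t_vanish k A)

theorem eBar_mk (x : A) :
    eBar k A (Submodule.Quotient.mk x) = clsReg k A (LinearMap.toSpanSingleton A A x) :=
  Submodule.liftQ_apply _ (e0 k A) x

theorem tBar_cls (P : PMod A) (f : P.carrier →ₗ[A] P.carrier) :
    tBar k A (clsOf k A P f) = tP k A P f := by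
  have h1 : tBar k A (clsOf k A P f) =
      tSum k A (DirectSum.of (fun P : PMod A => P.carrier →ₗ[A] P.carrier) P f) :=
    Submodule.liftQ_apply _ (tSum k A) _
  rw [h1, tSum_of]

end ProofAux

/-- Proposition 2.3: for a finite-dimensional algebra `A`, the map sending the class of
`x ∈ A` to the trace class of right multiplication `r_x` on the regular module is a
`k`-linear isomorphism `HH₀(A) ≃ HH₀(A-pmod)`. -/
theorem stmt4 [FiniteDimensional k A] :
    ∃ e : HH0alg k A ≃ₗ[k] HH0pmod k A,
      ∀ x : A,
        e (Submodule.Quotient.mk x) =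
          Submodule.Quotient.mk
            (DirectSum.of (fun P : PMod A => P.carrier →ₗ[A] P.carrier) (regMod A)
              (LinearMap.toSpanSingleton A A x)) := by
  have h1 : eBar k A ∘ₗ tBar k A = LinearMap.id := by
    apply Submodule.linearMap_qext
    refine DirectSum.linearMap_ext _ fun P => ?_
    apply LinearMap.ext; intro f
    simp only [LinearMap.comp_apply, Submodule.mkQ_apply, LinearMap.id_apply]
    have hc : (Submodule.Quotient.mk
        (DirectSum.lof k (PMod A) (fun P : PMod A => P.carrier →ₗ[A] P.carrier) P f) :
        HH0pmod k A) = clsOf k A P f := rfl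
    rw [hc, tBar_cls]
    have h2 : tP k A P f =
        Submodule.Quotient.mk (trF A (rS A P ∘ₗ f ∘ₗ rP A P)) := rfl
    rw [h2, eBar_mk]
    exact (gen_reduce k A P f).symm
  have h2 : tBar k A ∘ₗ eBar k A = LinearMap.id := by
    apply Submodule.linearMap_qext
    apply LinearMap.ext; intro x
    simp only [LinearMap.comp_apply, Submodule.mkQ_apply, LinearMap.id_apply]
    rw [eBar_mk]
    refine Eq.trans ?_
      (trace_reg k A x (rS A (regMod A)) (rP A (regMod A)) (fun y => rPS' A (regMod A) y))
    exact tBar_cls k A (regMod A) (LinearMap.toSpanSingleton A A x)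
  refine ⟨LinearEquiv.ofLinear (eBar k A) (tBar k A) h1 h2, fun x => ?_⟩
  rw [LinearEquiv.ofLinear_apply, eBar_mk]
  rfl
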